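/- Neither ρ = ζ̂ nor ρ̂ = ζ is possible; that is, ζ̂ ≠ ρ and ζ ≠ ρ̂ always hold. -/

import Mathlib

private lemma nig_aux (κ σ q θ μ s ρ' : ℝ) (hκ : 0 < κ) (hσ : 0 < σ)
    (hs : 0 < s) (hs2 : κ * s ^ 2 = κ * θ ^ 2 + σ ^ 2)
    (hρ : σ ^ 2 * ρ' = -θ + s)
    (hdr : θ ^ 2 + μ ^ 2 - 2 * θ * μ * (q * κ - 1) + q * σ ^ 2 * (2 - q * κ)
      = ((-θ - μ + κ * μ * q) - (κ * μ ^ 2 + σ ^ 2) * ρ') ^ 2)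
    (hr0 : 0 ≤ (-θ - μ + κ * μ * q) - (κ * μ ^ 2 + σ ^ 2) * ρ') : False := by
  have hB : 0 < κ * μ ^ 2 + σ ^ 2 := by positivity
  have key : σ ^ 2 * σ ^ 2 * (κ * μ ^ 2 + σ ^ 2) * (1 - q * κ + κ * μ * ρ') ^ 2 = 0 := by
    linear_combination (-(κ * σ ^ 2 * σ ^ 2)) * hdr
      + (κ * μ ^ 2 + σ ^ 2) * (-2 * κ * θ * σ ^ 2 - κ * σ ^ 2 * (σ ^ 2 * ρ' + (-θ + s))) * hρ
      + (κ * μ ^ 2 + σ ^ 2) * (-σ ^ 2) * hs2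
  have ht : (1 - q * κ + κ * μ * ρ') = 0 := by
    have hne : σ ^ 2 * σ ^ 2 * (κ * μ ^ 2 + σ ^ 2) ≠ 0 := by positivity
    have h' : (1 - q * κ + κ * μ * ρ') ^ 2 = 0 := (mul_eq_zero.mp key).resolve_left hne
    exact pow_eq_zero_iff two_ne_zero |>.mp h'
  have hrs : (-θ - μ + κ * μ * q) - (κ * μ ^ 2 + σ ^ 2) * ρ' = -s := by
    linear_combination (-μ) * ht - hρ
  linarith

/-- Neither ρ = ζ̂ nor ρ̂ = ζ is possible: ζ̂ ≠ ρ and ζ ≠ ρ̂ always hold. -/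
theorem nig_roots_never_equal_opposite_rhos
    (κ σ q θ μ ρ ρhat d : ℝ) (ζ ζhat : ℂ)
    (hκ : 0 < κ) (hσ : 0 < σ) (hq : 0 < q)
    (hρ : ρ = (-θ + Real.sqrt (θ ^ 2 + σ ^ 2 / κ)) / σ ^ 2)
    (hρhat : ρhat = (-θ - Real.sqrt (θ ^ 2 + σ ^ 2 / κ)) / σ ^ 2)
    (hd : d = θ ^ 2 + μ ^ 2 - 2 * θ * μ * (q * κ - 1) + q * σ ^ 2 * (2 - q * κ))
    (hζ : ζ = (((-θ - μ + κ * μ * q : ℝ) : ℂ) + (d : ℂ) ^ (1 / 2 : ℂ)) /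
      (((κ * μ ^ 2 + σ ^ 2 : ℝ)) : ℂ))
    (hζhat : ζhat = (((-θ - μ + κ * μ * q : ℝ) : ℂ) - (d : ℂ) ^ (1 / 2 : ℂ)) /
      (((κ * μ ^ 2 + σ ^ 2 : ℝ)) : ℂ)) :
    ζhat ≠ (ρ : ℂ) ∧ ζ ≠ (ρhat : ℂ) := by
  have hσ2 : (0:ℝ) < σ ^ 2 := by positivity
  have hB : (0:ℝ) < κ * μ ^ 2 + σ ^ 2 := by positivity
  have hBc : ((κ * μ ^ 2 + σ ^ 2 : ℝ) : ℂ) ≠ 0 :=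
    Complex.ofReal_ne_zero.mpr (ne_of_gt hB)
  set s := Real.sqrt (θ ^ 2 + σ ^ 2 / κ) with hsdef
  have hspos : 0 < θ ^ 2 + σ ^ 2 / κ := by positivity
  have hs : 0 < s := Real.sqrt_pos.mpr hspos
  have hs2 : κ * s ^ 2 = κ * θ ^ 2 + σ ^ 2 := by
    have h : s ^ 2 = θ ^ 2 + σ ^ 2 / κ := Real.sq_sqrt hspos.le
    rw [h]
    field_simp
  -- generic step: if the complex sqrt equals a real number r, then d = r ^ 2 and 0 ≤ r
  have sqrt_real : ∀ r : ℝ, (d : ℂ) ^ (1 / 2 : ℂ) = (r : ℂ) → d = r ^ 2 ∧ 0 ≤ r := by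
    intro r h
    have hsq : ((d : ℂ) ^ (1 / 2 : ℂ)) ^ 2 = (d : ℂ) := by
      have h2 : (1 / 2 : ℂ) = (((2:ℕ) : ℂ))⁻¹ := by norm_num
      rw [h2]
      exact_mod_cast Complex.cpow_nat_inv_pow (d : ℂ) two_ne_zero
    have hd2 : (d : ℂ) = ((r ^ 2 : ℝ) : ℂ) := by
      rw [← hsq, h]; push_cast; ring
    have hdr : d = r ^ 2 := by exact_mod_cast hd2
    refine ⟨hdr, ?_⟩
    have habs : ((|r| : ℝ) : ℂ) = (r : ℂ) := by
      rw [← h, hd2]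
      have h12 : (1 / 2 : ℂ) = ((1 / 2 : ℝ) : ℂ) := by norm_num
      rw [h12, ← Complex.ofReal_cpow (sq_nonneg r) (1/2)]
      congr 1
      rw [← Real.sqrt_eq_rpow, Real.sqrt_sq_eq_abs]
    have habs' : |r| = r := by exact_mod_cast habs
    rw [← habs']; exact abs_nonneg r
  constructor
  · intro h
    rw [hζhat, div_eq_iff hBc] at h
    have hw : (d : ℂ) ^ (1 / 2 : ℂ)
        = (((-θ - μ + κ * μ * q) - (κ * μ ^ 2 + σ ^ 2) * ρ : ℝ) : ℂ) := by
      push_cast at h ⊢; linear_combination -h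
    obtain ⟨hdr, hr0⟩ := sqrt_real _ hw
    refine nig_aux κ σ q θ μ s ρ hκ hσ hs hs2 ?_ (by rw [hd] at hdr; linarith) hr0
    rw [hρ]; field_simp
  · intro h
    rw [hζ, div_eq_iff hBc] at h
    have hw : (d : ℂ) ^ (1 / 2 : ℂ)
        = (((κ * μ ^ 2 + σ ^ 2) * ρhat - (-θ - μ + κ * μ * q) : ℝ) : ℂ) := by
      push_cast at h ⊢; linear_combination h
    obtain ⟨hdr, hr0⟩ := sqrt_real _ hw
    refine nig_aux κ σ q (-θ) (-μ) s (-ρhat) hκ hσ hs (by linarith) ?_ ?_ ?_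
    · rw [hρhat]; field_simp; ring
    · rw [hd] at hdr; linear_combination hdr
    · linarith [hr0]
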